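/- If G is a tree on n vertices, then the Laplacian simplex T_G is unimodularly equivalent to the simplex conv{e_1, ..., e_{n-1}, -(e_1+...+e_{n-1})} ⊂ R^{n-1}; consequently T_G has normalized volume n. -/

import Mathlib

open Matrix SimpleGraph Finset

section Helpers

set_option linter.unusedSectionVars false

variable {V : Type} [Fintype V] [DecidableEq V]

lemma lap_apply (G : SimpleGraph V) [DecidableRel G.Adj] (x y : V) :
    G.lapMatrix ℤ x y =
      (if x = y then (G.degree x : ℤ) else 0) - (if G.Adj x y then 1 else 0) := by
  simp [SimpleGraph.lapMatrix, SimpleGraph.degMatrix, Matrix.sub_apply,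
    Matrix.diagonal_apply, SimpleGraph.adjMatrix_apply]

lemma degree_pos (G : SimpleGraph V) [DecidableRel G.Adj] (hc : G.Connected)
    (h2 : 2 ≤ Fintype.card V) (u : V) : 0 < G.degree u := by
  rw [G.degree_pos_iff_exists_adj]
  obtain ⟨u', hne⟩ := Fintype.exists_ne_of_one_lt_card h2 u
  obtain ⟨p⟩ := hc.preconnected u u'
  obtain ⟨w, h, -, -⟩ := SimpleGraph.Walk.exists_eq_cons_of_ne hne.symm p
  exact ⟨w, h⟩

lemma exists_leaf (G : SimpleGraph V) [DecidableRel G.Adj] (hG : G.IsTree)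
    (h2 : 2 ≤ Fintype.card V) (v : V) : ∃ u, u ≠ v ∧ G.degree u = 1 := by
  by_contra hcon
  push_neg at hcon
  have hdeg : ∀ u ∈ univ.erase v, 2 ≤ G.degree u := by
    intro u hu
    have h1 := degree_pos G hG.isConnected h2 u
    have h2' := hcon u (Finset.ne_of_mem_erase hu)
    omega
  have hv : 0 < G.degree v := degree_pos G hG.isConnected h2 v
  have hedge := hG.card_edgeFinset
  have hsum : ∑ u, G.degree u = 2 * G.edgeFinset.card :=
    SimpleGraph.sum_degrees_eq_twice_card_edges G
  have hsplit := Finset.add_sum_erase univ (fun u => G.degree u) (Finset.mem_univ v)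
  have hlow : 2 * (Fintype.card V - 1) ≤ ∑ u ∈ univ.erase v, G.degree u := by
    calc 2 * (Fintype.card V - 1) = ∑ _u ∈ univ.erase v, 2 := by
          rw [Finset.sum_const, Finset.card_erase_of_mem (Finset.mem_univ v),
            Finset.card_univ, smul_eq_mul, Nat.mul_comm]
      _ ≤ _ := Finset.sum_le_sum hdeg
  omega

lemma unique_nbr (G : SimpleGraph V) [DecidableRel G.Adj] {u : V} (hu : G.degree u = 1) :
    ∃ w, ∀ x, G.Adj u x ↔ x = w := by
  have hu' : (G.neighborFinset u).card = 1 := hu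
  obtain ⟨w, hw⟩ := Finset.card_eq_one.mp hu'
  exact ⟨w, fun x => by rw [← SimpleGraph.mem_neighborFinset, hw, Finset.mem_singleton]⟩


lemma reachable_induce_of_support (G : SimpleGraph V) (s : Set V) :
    ∀ {x y : V} (p : G.Walk x y) (hp : ∀ z ∈ p.support, z ∈ s),
      (G.induce s).Reachable ⟨x, hp x p.start_mem_support⟩ ⟨y, hp y p.end_mem_support⟩ := by
  intro x y p
  induction p with
  | nil => exact fun hp => Reachable.refl _
  | @cons a b c h q ih =>
      intro hp
      have hb : b ∈ s := hp b (by simp)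
      have ha : a ∈ s := hp a (by simp)
      have hadj : (G.induce s).Adj ⟨a, ha⟩ ⟨b, hb⟩ := by simpa using h
      exact hadj.reachable.trans (ih (fun z hz => hp z (by simp [hz])))

lemma leaf_not_mem_path (G : SimpleGraph V) [DecidableRel G.Adj] {u w : V}
    (hw : ∀ x, G.Adj u x ↔ x = w) {x y : V} (hx : x ≠ u) (hy : y ≠ u)
    (p : G.Walk x y) (hp : p.IsPath) : u ∉ p.support := by
  intro hmem
  have hspec := p.take_spec hmem
  have hnodup : ((p.takeUntil u hmem).support ++ (p.dropUntil u hmem).support.tail).Nodup := by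
    rw [← SimpleGraph.Walk.support_append, hspec]; exact hp.support_nodup
  have hdisj := List.disjoint_of_nodup_append hnodup
  obtain ⟨b, hb, r', hr⟩ :=
    SimpleGraph.Walk.exists_eq_cons_of_ne (Ne.symm hy) (p.dropUntil u hmem)
  have hwtail : w ∈ (p.dropUntil u hmem).support.tail := by
    rw [hr]
    have hbw : b = w := (hw b).mp hb
    simpa [SimpleGraph.Walk.support_cons] using (hbw ▸ r'.start_mem_support)
  obtain ⟨c, hc, q'', hq⟩ :=
    SimpleGraph.Walk.exists_eq_cons_of_ne (Ne.symm hx) (p.takeUntil u hmem).reverse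
  have hwtake : w ∈ (p.takeUntil u hmem).support := by
    have hcmem : c ∈ (p.takeUntil u hmem).reverse.support := by
      rw [hq, SimpleGraph.Walk.support_cons]
      exact List.mem_cons_of_mem _ q''.start_mem_support
    rw [SimpleGraph.Walk.support_reverse, List.mem_reverse] at hcmem
    exact (hw c).mp hc ▸ hcmem
  exact hdisj hwtake hwtail

lemma isTree_induce (G : SimpleGraph V) [DecidableRel G.Adj] (hG : G.IsTree)
    {u w : V} (hw : ∀ x, G.Adj u x ↔ x = w) :
    (G.induce {z | z ≠ u}).IsTree := by
  constructor
  · rw [SimpleGraph.connected_iff]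
    constructor
    · rintro ⟨x, hx⟩ ⟨y, hy⟩
      obtain ⟨p0⟩ := hG.isConnected.preconnected x y
      have hup : u ∉ (p0.toPath : G.Walk x y).support :=
        leaf_not_mem_path G hw hx hy _ p0.toPath.2
      have := reachable_induce_of_support G {z | z ≠ u} (p0.toPath : G.Walk x y)
        (fun z hz => by
          intro hzu
          exact hup (hzu ▸ hz))
      exact this
    · have huw : u ≠ w := G.ne_of_adj ((hw w).mpr rfl)
      exact ⟨⟨w, Ne.symm huw⟩⟩
  · intro a c hc
    exact hG.IsAcyclic (c.map (SimpleGraph.Embedding.induce {z | z ≠ u}).toHom)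
      (hc.map (by simpa using (SimpleGraph.Embedding.induce (G := G) {z | z ≠ u}).injective))


lemma degree_induce_int (G : SimpleGraph V) [DecidableRel G.Adj] (u : V)
    [DecidableRel (G.induce {z | z ≠ u}).Adj] (x : V) (hx : x ≠ u) :
    (((G.induce {z | z ≠ u}).degree ⟨x, hx⟩ : ℤ))
      = (G.degree x : ℤ) - (if G.Adj x u then 1 else 0) := by
  rw [SimpleGraph.degree_eq_sum_if_adj, SimpleGraph.degree_eq_sum_if_adj]
  have hLHS : (∑ y : {z : V | z ≠ u}, if (G.induce {z | z ≠ u}).Adj ⟨x, hx⟩ y then (1:ℤ) else 0)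
      = ∑ y : {z : V | z ≠ u}, (fun t => if G.Adj x t then (1:ℤ) else 0) ↑y := by
    apply Finset.sum_congr rfl
    intro y _
    exact if_congr (by simp) rfl rfl
  rw [hLHS, Finset.sum_set_coe (f := fun t => if G.Adj x t then (1:ℤ) else 0)]
  have h2 : ({z : V | z ≠ u} : Set V).toFinset = Finset.univ.erase u := by
    ext z
    simp [Set.mem_toFinset]
  rw [h2]
  have h3 := Finset.add_sum_erase univ (fun t => if G.Adj x t then (1:ℤ) else 0)
      (Finset.mem_univ u)
  omega

lemma entry_key (G : SimpleGraph V) [DecidableRel G.Adj] {u w : V}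
    (hw : ∀ x, G.Adj u x ↔ x = w)
    [DecidableRel (G.induce {z | z ≠ u}).Adj]
    {x y : V} (hx : x ≠ u) (hy : y ≠ u) :
    (G.induce {z | z ≠ u}).lapMatrix ℤ ⟨x, hx⟩ ⟨y, hy⟩
      = G.lapMatrix ℤ x y - G.lapMatrix ℤ x u * G.lapMatrix ℤ u y := by
  have hAxu : G.Adj x u ↔ x = w := by rw [SimpleGraph.adj_comm]; exact hw x
  have hAuy : G.Adj u y ↔ y = w := hw y
  rw [lap_apply, lap_apply, lap_apply, lap_apply]
  rw [degree_induce_int G u x hx]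
  rw [if_neg (show ¬ (x = u) from hx), if_neg (show ¬ (u = y) from fun h => hy h.symm)]
  have hsub : ((⟨x, hx⟩ : {z : V | z ≠ u}) = ⟨y, hy⟩) ↔ x = y := Subtype.mk_eq_mk
  have hadj : (G.induce {z | z ≠ u}).Adj ⟨x, hx⟩ ⟨y, hy⟩ ↔ G.Adj x y := by simp
  rw [if_congr hsub rfl rfl, if_congr hadj rfl rfl, if_congr hAxu rfl rfl,
    if_congr hAuy rfl rfl]
  by_cases hxy : x = y
  · subst hxy
    rw [if_pos rfl, if_pos rfl]
    rw [if_neg (show ¬ G.Adj x x from G.irrefl)]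
    by_cases hxw : x = w
    · rw [if_pos hxw]; ring
    · rw [if_neg hxw]; ring
  · rw [if_neg hxy, if_neg hxy]
    by_cases hxw : x = w
    · have hyw : ¬ y = w := fun h => hxy (hxw.trans h.symm)
      rw [if_pos hxw, if_neg hyw]; ring
    · rw [if_neg hxw]; ring

end Helpers

set_option linter.unusedSectionVars false in
lemma tree_lap_det (k : ℕ) (V : Type) [Fintype V] [DecidableEq V]
    (G : SimpleGraph V) [DecidableRel G.Adj] (hcard : Fintype.card V = k)
    (hG : G.IsTree) (v : V) :
    ((G.lapMatrix ℤ).submatrix (Subtype.val : {x : V // x ≠ v} → V) Subtype.val).det = 1 := by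
  have hpos : 0 < Fintype.card V := Fintype.card_pos_iff.mpr hG.isConnected.nonempty
  by_cases h1 : Fintype.card V = 1
  · haveI : IsEmpty {x : V // x ≠ v} := ⟨by
      rintro ⟨x, hx⟩
      exact hx (Fintype.card_le_one_iff.mp (by omega) x v)⟩
    exact Matrix.det_isEmpty
  · have h2 : 2 ≤ Fintype.card V := by omega
    obtain ⟨u, huv, hdeg⟩ := exists_leaf G hG h2 v
    obtain ⟨w, hw⟩ := unique_nbr G hdeg
    letI instI : DecidableRel (G.induce {z : V | z ≠ u}).Adj :=
      fun a b => decidable_of_iff (G.Adj a b) (by simp)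
    have hG' : (G.induce {z : V | z ≠ u}).IsTree := isTree_induce G hG hw
    have hv_ne_u : v ≠ u := Ne.symm huv
    have hcard' : Fintype.card {z : V | z ≠ u} = k - 1 := by
      have hc1 : Fintype.card {z : V | z ≠ u} = (Finset.univ.filter (fun z : V => z ≠ u)).card :=
        Fintype.card_subtype _
      rw [hc1, Finset.filter_ne', Finset.card_erase_of_mem (Finset.mem_univ u),
        Finset.card_univ, hcard]
    set vS : {z : V | z ≠ u} := ⟨v, hv_ne_u⟩ with hvS
    have hih := tree_lap_det (k - 1) {z : V | z ≠ u} (G.induce {z : V | z ≠ u})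
      hcard' hG' vS
    -- block decomposition
    let e : Unit ⊕ {y : {z : V | z ≠ u} // y ≠ vS} ≃ {x : V // x ≠ v} :=
      { toFun := Sum.elim (fun _ => ⟨u, huv⟩)
          (fun t => ⟨t.1.1, fun h => t.2 (Subtype.ext h)⟩)
        invFun := fun x => if h : x.1 = u then Sum.inl ()
          else Sum.inr ⟨⟨x.1, h⟩, fun hh => x.2 (congrArg Subtype.val hh)⟩
        left_inv := by
          rintro (⟨⟩ | ⟨⟨z, hz⟩, ht⟩)
          · simp
          · have hz' : z ≠ u := hz
            simp [hz']
        right_inv := by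
          rintro ⟨x, hx⟩
          by_cases h : x = u
          · subst h
            simp
          · simp [h] }
    rw [← Matrix.det_submatrix_equiv_self e]
    have hblock : (((G.lapMatrix ℤ).submatrix
          (Subtype.val : {x : V // x ≠ v} → V) Subtype.val).submatrix e e)
        = Matrix.fromBlocks 1
            (Matrix.of fun (_ : Unit) (t : {y : {z : V | z ≠ u} // y ≠ vS}) =>
              G.lapMatrix ℤ u t.1.1)
            (Matrix.of fun (t : {y : {z : V | z ≠ u} // y ≠ vS}) (_ : Unit) =>
              G.lapMatrix ℤ t.1.1 u)
            (Matrix.of fun (t t' : {y : {z : V | z ≠ u} // y ≠ vS}) =>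
              G.lapMatrix ℤ t.1.1 t'.1.1) := by
      ext i j
      cases i with
      | inl i =>
          cases j with
          | inl j =>
              show G.lapMatrix ℤ u u = (1 : Matrix Unit Unit ℤ) i i
              rw [Matrix.one_apply_eq, lap_apply, if_pos rfl, hdeg,
                if_neg (show ¬ G.Adj u u from G.irrefl)]
              norm_num
          | inr t => rfl
      | inr t =>
          cases j with
          | inl j => rfl
          | inr t' => rfl
    rw [hblock, Matrix.det_fromBlocks_one₁₁]
    have hDC : (Matrix.of fun (t t' : {y : {z : V | z ≠ u} // y ≠ vS}) =>
            G.lapMatrix ℤ t.1.1 t'.1.1)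
          - (Matrix.of fun (t : {y : {z : V | z ≠ u} // y ≠ vS}) (_ : Unit) =>
              G.lapMatrix ℤ t.1.1 u)
            * (Matrix.of fun (_ : Unit) (t : {y : {z : V | z ≠ u} // y ≠ vS}) =>
              G.lapMatrix ℤ u t.1.1)
        = ((G.induce {z : V | z ≠ u}).lapMatrix ℤ).submatrix
            (Subtype.val : {y : {z : V | z ≠ u} // y ≠ vS} → {z : V | z ≠ u}) Subtype.val := by
      ext t t'
      rw [Matrix.sub_apply, Matrix.mul_apply]
      rw [Finset.univ_unique, Finset.sum_singleton]
      show G.lapMatrix ℤ t.1.1 t'.1.1 - G.lapMatrix ℤ t.1.1 u * G.lapMatrix ℤ u t'.1.1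
        = (G.induce {z : V | z ≠ u}).lapMatrix ℤ t.1 t'.1
      rw [show (t.1 : {z : V | z ≠ u}) = ⟨t.1.1, t.1.2⟩ from rfl,
        show (t'.1 : {z : V | z ≠ u}) = ⟨t'.1.1, t'.1.2⟩ from rfl]
      rw [entry_key G hw t.1.2 t'.1.2]
    rw [hDC]
    exact hih
termination_by k
decreasing_by omega


section FinStuff

variable {n : ℕ}

/-- inclusion of `Fin (n-1)` into `Fin n`. -/
def fIncl (n : ℕ) : Fin (n - 1) → Fin n :=
  fun i => ⟨i.1, lt_of_lt_of_le i.2 (Nat.sub_le n 1)⟩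

/-- the last element of `Fin n`. -/
def vLast (n : ℕ) (hn : 1 ≤ n) : Fin n := ⟨n - 1, by omega⟩

lemma fIncl_val (i : Fin (n-1)) : ((fIncl n i : Fin n) : ℕ) = (i : ℕ) := rfl

lemma fIncl_ne_vLast (hn : 1 ≤ n) (i : Fin (n-1)) : fIncl n i ≠ vLast n hn := by
  intro h
  have h2 : (i : ℕ) = n - 1 := congrArg Fin.val h
  have h3 := i.2
  omega

/-- splitting `Fin n` as `Fin (n-1) ⊕ Unit`. -/
def qEquiv (n : ℕ) (hn : 1 ≤ n) : Fin (n - 1) ⊕ Unit ≃ Fin n where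
  toFun := Sum.elim (fIncl n) (fun _ => vLast n hn)
  invFun := fun x => if h : (x : ℕ) < n - 1 then Sum.inl ⟨x, h⟩ else Sum.inr ()
  left_inv := by
    rintro (i | ⟨⟩)
    · have h : (i : ℕ) < n - 1 := i.2
      simp only [Sum.elim_inl]
      refine (dif_pos (show ((fIncl n i : Fin n) : ℕ) < n - 1 from h)).trans ?_
      rfl
    · simp only [Sum.elim_inr]
      exact (dif_neg (show ¬ ((vLast n hn : Fin n) : ℕ) < n - 1 from by
        show ¬ (n - 1 < n - 1); omega)).trans rfl
  right_inv := by
    intro x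
    show Sum.elim (fIncl n) (fun _ => vLast n hn)
        (if h : (x : ℕ) < n - 1 then Sum.inl ⟨(x : ℕ), h⟩ else Sum.inr ()) = x
    by_cases h : (x : ℕ) < n - 1
    · rw [dif_pos h]
      rfl
    · rw [dif_neg h]
      have hx := x.2
      exact Fin.ext (show n - 1 = (x : ℕ) by omega)

lemma sum_split (hn : 1 ≤ n) (g : Fin n → ℤ) :
    ∑ k, g k = (∑ i : Fin (n-1), g (fIncl n i)) + g (vLast n hn) := by
  calc ∑ k, g k = ∑ x : Fin (n-1) ⊕ Unit, g ((qEquiv n hn) x) :=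
        (Equiv.sum_comp _ g).symm
    _ = (∑ a : Fin (n-1), g ((qEquiv n hn) (Sum.inl a)))
        + ∑ x : Unit, g ((qEquiv n hn) (Sum.inr x)) := Fintype.sum_sum_type _
    _ = (∑ i : Fin (n-1), g (fIncl n i)) + g (vLast n hn) := by
        rw [show (∑ x : Unit, g ((qEquiv n hn) (Sum.inr x))) = g (vLast n hn) from
          Fintype.sum_unique _]
        exact congrArg (· + g (vLast n hn)) (Finset.sum_congr rfl fun a _ => rfl)

/-- `Fin (n-1)` is equivalent to `Fin n` minus its last element. -/
def e2Equiv (n : ℕ) (hn : 1 ≤ n) : Fin (n - 1) ≃ {x : Fin n // x ≠ vLast n hn} where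
  toFun := fun i => ⟨fIncl n i, fIncl_ne_vLast hn i⟩
  invFun := fun x => ⟨(x.1 : ℕ), by
    have hxne : (x.1 : ℕ) ≠ n - 1 := fun h => x.2 (Fin.ext h)
    have hlt := x.1.2
    omega⟩
  left_inv := fun i => Fin.ext rfl
  right_inv := fun x => Subtype.ext (Fin.ext rfl)

end FinStuff

/-- If `G` is a tree on `n` vertices, then the Laplacian simplex `T_G`
(the convex hull of the rows of `L_B = L·A`) is unimodularly equivalent to
`conv{e_1, …, e_{n-1}, -(e_1 + ⋯ + e_{n-1})}`: an affine lattice-preserving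
map carries the vertex set of one onto the other.  Consequently `T_G` has
normalized volume `n`, i.e. `|det [L_B | 1]| = n`. -/
theorem tree_laplacian_simplex_unimodular {n : ℕ} (hn : 2 ≤ n)
    (G : SimpleGraph (Fin n)) [DecidableRel G.Adj] (hG : G.IsTree)
    (A : Matrix (Fin n) (Fin (n - 1)) ℤ)
    (hA : ∀ i j, A i j = if (i : ℕ) ≤ (j : ℕ) then 1 else 0)
    (M : Matrix (Fin n) (Fin n) ℤ)
    (hM : ∀ i (j : Fin n), M i j =
      if h : (j : ℕ) < n - 1 then (G.lapMatrix ℤ * A) i ⟨j, h⟩ else 1) :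
    (∃ (U : Matrix (Fin (n - 1)) (Fin (n - 1)) ℤ) (b : Fin (n - 1) → ℤ),
      IsUnit U.det ∧
      ((fun v => U.mulVec v + b) ''
          (Set.range fun i : Fin n => (G.lapMatrix ℤ * A) i)) =
        (Set.range fun i : Fin (n - 1) => (Pi.single i 1 : Fin (n - 1) → ℤ)) ∪
          {fun _ => -1}) ∧
    M.det.natAbs = n := by
  have hn1 : 1 ≤ n := by omega
  -- column sums of the Laplacian vanish
  have hrow0 : ∀ a : Fin n, ∑ k, G.lapMatrix ℤ a k = 0 := by
    intro a
    have h := congrFun (G.lapMatrix_mulVec_const_eq_zero (R := ℤ)) a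
    simpa [Matrix.mulVec, dotProduct] using h
  have hsymL : ∀ a b : Fin n, G.lapMatrix ℤ a b = G.lapMatrix ℤ b a :=
    fun a b => ((G.isSymm_lapMatrix (R := ℤ)).apply a b).symm
  have hcol0 : ∀ k : Fin n, ∑ a, G.lapMatrix ℤ a k = 0 := by
    intro k
    calc ∑ a, G.lapMatrix ℤ a k = ∑ a, G.lapMatrix ℤ k a :=
          Finset.sum_congr rfl fun a _ => hsymL a k
      _ = 0 := hrow0 k
  have hcolLA : ∀ j : Fin (n-1), ∑ i, (G.lapMatrix ℤ * A) i j = 0 := by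
    intro j
    calc ∑ i, (G.lapMatrix ℤ * A) i j = ∑ i, ∑ m, G.lapMatrix ℤ i m * A m j :=
          Finset.sum_congr rfl fun i _ => Matrix.mul_apply
      _ = ∑ m, ∑ i, G.lapMatrix ℤ i m * A m j := Finset.sum_comm
      _ = ∑ m, (∑ i, G.lapMatrix ℤ i m) * A m j :=
          Finset.sum_congr rfl fun m _ => (Finset.sum_mul _ _ _).symm
      _ = 0 := by
          apply Finset.sum_eq_zero
          intro m _
          rw [hcol0 m, zero_mul]
  -- the key square matrices
  set N : Matrix (Fin (n-1)) (Fin (n-1)) ℤ :=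
    Matrix.of (fun i j => (G.lapMatrix ℤ * A) (fIncl n i) j) with hNdef
  have hvlastA : ∀ j : Fin (n-1), A (vLast n hn1) j = 0 := by
    intro j
    rw [hA]
    exact if_neg (by
      show ¬ ((vLast n hn1 : Fin n) : ℕ) ≤ (j : ℕ)
      have := j.2
      show ¬ (n - 1 ≤ (j : ℕ))
      omega)
  have hN : N = ((G.lapMatrix ℤ).submatrix (fIncl n) (fIncl n))
      * Matrix.of (fun i j : Fin (n-1) => if (i:ℕ) ≤ (j:ℕ) then (1:ℤ) else 0) := by
    ext i j
    show (G.lapMatrix ℤ * A) (fIncl n i) j = _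
    rw [Matrix.mul_apply, Matrix.mul_apply,
      sum_split hn1 (fun k => G.lapMatrix ℤ (fIncl n i) k * A k j), hvlastA j, mul_zero,
      add_zero]
    apply Finset.sum_congr rfl
    intro k _
    rw [hA]
    rfl
  have hdetBup : (Matrix.of (fun i j : Fin (n-1) =>
      if (i:ℕ) ≤ (j:ℕ) then (1:ℤ) else 0)).det = 1 := by
    rw [Matrix.det_of_upperTriangular (by
      intro i j hij
      show (if (i:ℕ) ≤ (j:ℕ) then (1:ℤ) else 0) = 0
      rw [if_neg]
      have : (j:ℕ) < (i:ℕ) := hij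
      omega)]
    apply Finset.prod_eq_one
    intro i _
    show (if (i:ℕ) ≤ (i:ℕ) then (1:ℤ) else 0) = 1
    rw [if_pos le_rfl]
  have hdetP : ((G.lapMatrix ℤ).submatrix (fIncl n) (fIncl n)).det = 1 := by
    have hPform : (G.lapMatrix ℤ).submatrix (fIncl n) (fIncl n)
        = ((G.lapMatrix ℤ).submatrix
            (Subtype.val : {x : Fin n // x ≠ vLast n hn1} → Fin n) Subtype.val).submatrix
          (e2Equiv n hn1) (e2Equiv n hn1) := by
      ext i j
      rfl
    rw [hPform, Matrix.det_submatrix_equiv_self]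
    exact tree_lap_det n (Fin n) G (Fintype.card_fin n) hG (vLast n hn1)
  have hdetN : N.det = 1 := by
    rw [hN, Matrix.det_mul, hdetP, hdetBup, one_mul]
  -- determinant of M
  set M₂ : Matrix (Fin n) (Fin n) ℤ := M.updateRow (vLast n hn1) (∑ k, M k) with hM₂def
  have hdetM2 : M₂.det = M.det := by
    have h := Matrix.det_updateRow_sum M (vLast n hn1) (fun _ => (1:ℤ))
    simpa using h
  have hM2row : ∀ j, M₂ (vLast n hn1) j = ∑ k, M k j := by
    intro j
    show (M.updateRow (vLast n hn1) (∑ k, M k)) (vLast n hn1) j = _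
    rw [Matrix.updateRow_self]
    exact Finset.sum_apply j Finset.univ (fun k => M k)
  have hM2ne : ∀ (i : Fin n) (j), i ≠ vLast n hn1 → M₂ i j = M i j := by
    intro i j h
    show (M.updateRow (vLast n hn1) (∑ k, M k)) i j = _
    rw [Matrix.updateRow_ne h]
  have hMf : ∀ (i : Fin n) (j : Fin (n-1)), M i (fIncl n j) = (G.lapMatrix ℤ * A) i j := by
    intro i j
    rw [hM i (fIncl n j), dif_pos (show ((fIncl n j : Fin n) : ℕ) < n - 1 from j.2)]
    rfl
  have hMlast : ∀ i : Fin n, M i (vLast n hn1) = 1 := by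
    intro i
    rw [hM i (vLast n hn1), dif_neg (show ¬ ((vLast n hn1 : Fin n) : ℕ) < n - 1 from by
      show ¬ (n - 1 < n - 1); omega)]
  have hblock2 : M₂.submatrix (qEquiv n hn1) (qEquiv n hn1)
      = Matrix.fromBlocks N (Matrix.of fun _ _ => (1:ℤ)) 0 (Matrix.of fun _ _ => (n:ℤ)) := by
    ext i j
    cases i with
    | inl i =>
        cases j with
        | inl j =>
            show M₂ (fIncl n i) (fIncl n j) = N i j
            rw [hM2ne _ _ (fIncl_ne_vLast hn1 i), hMf]
            rfl
        | inr u =>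
            show M₂ (fIncl n i) (vLast n hn1) = 1
            rw [hM2ne _ _ (fIncl_ne_vLast hn1 i), hMlast]
    | inr u =>
        cases j with
        | inl j =>
            show M₂ (vLast n hn1) (fIncl n j) = 0
            rw [hM2row]
            calc ∑ k, M k (fIncl n j) = ∑ k, (G.lapMatrix ℤ * A) k j :=
                  Finset.sum_congr rfl fun k _ => hMf k j
              _ = 0 := hcolLA j
        | inr u' =>
            show M₂ (vLast n hn1) (vLast n hn1) = (n:ℤ)
            rw [hM2row]
            calc ∑ k, M k (vLast n hn1) = ∑ _k : Fin n, (1:ℤ) :=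
                  Finset.sum_congr rfl fun k _ => hMlast k
              _ = (n:ℤ) := by simp
  have hdetM : M.det = (n : ℤ) := by
    rw [← hdetM2, ← Matrix.det_submatrix_equiv_self (qEquiv n hn1) M₂, hblock2,
      Matrix.det_fromBlocks_zero₂₁, hdetN, one_mul, Matrix.det_unique]
    rfl
  -- the unimodular transformation
  have hUN : N.transpose.adjugate * N.transpose = 1 := by
    rw [Matrix.adjugate_mul, Matrix.det_transpose, hdetN, one_smul]
  have hUdet : IsUnit (N.transpose.adjugate).det :=
    IsUnit.of_mul_eq_one (N.transpose.det)
      (by rw [← Matrix.det_mul, hUN, Matrix.det_one])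
  have hUNapp : ∀ (j i' : Fin (n-1)),
      (∑ k, N.transpose.adjugate j k * (G.lapMatrix ℤ * A) (fIncl n i') k)
        = if j = i' then 1 else 0 := by
    intro j i'
    calc (∑ k, N.transpose.adjugate j k * (G.lapMatrix ℤ * A) (fIncl n i') k)
        = (N.transpose.adjugate * N.transpose) j i' := by
          rw [Matrix.mul_apply]
          exact Finset.sum_congr rfl fun k _ => rfl
      _ = if j = i' then 1 else 0 := by rw [hUN, Matrix.one_apply]
  have hone : ∀ i' : Fin (n-1),
      N.transpose.adjugate.mulVec ((G.lapMatrix ℤ * A) (fIncl n i')) + 0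
        = Pi.single i' 1 := by
    intro i'
    funext j
    simp only [Pi.add_apply, Pi.zero_apply, add_zero]
    show (∑ k, N.transpose.adjugate j k * (G.lapMatrix ℤ * A) (fIncl n i') k)
      = (Pi.single i' 1 : Fin (n-1) → ℤ) j
    rw [hUNapp j i', Pi.single_apply]
  have hlastrow : ∀ k : Fin (n-1), (G.lapMatrix ℤ * A) (vLast n hn1) k
      = - ∑ i' : Fin (n-1), (G.lapMatrix ℤ * A) (fIncl n i') k := by
    intro k
    have h0 := hcolLA k
    rw [sum_split hn1 (fun i => (G.lapMatrix ℤ * A) i k)] at h0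
    linarith
  have hneg : N.transpose.adjugate.mulVec ((G.lapMatrix ℤ * A) (vLast n hn1)) + 0
      = fun _ => (-1 : ℤ) := by
    funext j
    simp only [Pi.add_apply, Pi.zero_apply, add_zero]
    show (∑ k, N.transpose.adjugate j k * (G.lapMatrix ℤ * A) (vLast n hn1) k) = -1
    calc (∑ k, N.transpose.adjugate j k * (G.lapMatrix ℤ * A) (vLast n hn1) k)
        = ∑ k, N.transpose.adjugate j k
            * (- ∑ i' : Fin (n-1), (G.lapMatrix ℤ * A) (fIncl n i') k) :=
          Finset.sum_congr rfl fun k _ => by rw [hlastrow k]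
      _ = - ∑ k, ∑ i' : Fin (n-1),
            N.transpose.adjugate j k * (G.lapMatrix ℤ * A) (fIncl n i') k := by
          rw [← Finset.sum_neg_distrib]
          exact Finset.sum_congr rfl fun k _ => by rw [mul_neg, Finset.mul_sum]
      _ = - ∑ i' : Fin (n-1), ∑ k,
            N.transpose.adjugate j k * (G.lapMatrix ℤ * A) (fIncl n i') k := by
          rw [Finset.sum_comm]
      _ = - ∑ i' : Fin (n-1), if j = i' then (1:ℤ) else 0 := by
          rw [show (∑ i' : Fin (n-1), ∑ k, N.transpose.adjugate j k
              * (G.lapMatrix ℤ * A) (fIncl n i') k)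
            = ∑ i' : Fin (n-1), if j = i' then (1:ℤ) else 0 from
            Finset.sum_congr rfl fun i' _ => hUNapp j i']
      _ = -1 := by
          rw [Finset.sum_ite_eq, if_pos (Finset.mem_univ j)]
  refine ⟨⟨N.transpose.adjugate, 0, hUdet, ?_⟩, by rw [hdetM]; exact Int.natAbs_natCast n⟩
  ext z
  simp only [Set.mem_image, Set.mem_range, Set.mem_union, Set.mem_singleton_iff]
  constructor
  · rintro ⟨-, ⟨i, rfl⟩, rfl⟩
    by_cases h : (i : ℕ) < n - 1
    · left
      exact ⟨⟨(i : ℕ), h⟩, (hone ⟨(i : ℕ), h⟩).symm⟩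
    · right
      have hi : i = vLast n hn1 := Fin.ext (by
        have := i.2
        show (i : ℕ) = n - 1
        omega)
      rw [hi]
      exact hneg
  · rintro (⟨i', rfl⟩ | rfl)
    · exact ⟨(G.lapMatrix ℤ * A) (fIncl n i'), ⟨fIncl n i', rfl⟩, hone i'⟩
    · exact ⟨(G.lapMatrix ℤ * A) (vLast n hn1), ⟨vLast n hn1, rfl⟩, hneg⟩
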